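/- For each n ≥ 2 let p_n, q_n ∈ (0,1), let the prior on Θ_n be uniform, and let θ_n ∈ Θ_n. If n·ρ(p_n,q_n)^{n/2} → 0 as n → ∞, then P_{θ_n} Π({θ_n} | X^n) → 1, i.e. the posterior recovers the true community assignment exactly. -/

import Mathlib

open Finset Real Filter

/-- The set of potential edges of an `n`-vertex graph: pairs `(i,j)` with `i < j`. -/
abbrev Edge (n : ℕ) := {e : Fin n × Fin n // e.1 < e.2}

/-- An observed graph: an edge indicator for each potential edge. -/
abbrev ObsGraph (n : ℕ) := Edge n → Bool

/-- Edge probability under assignment `θ`: `p` within communities, `q` between. -/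
noncomputable def edgeProb {n : ℕ} (p q : ℝ) (θ : Fin n → Bool) (e : Edge n) : ℝ :=
  if θ e.val.1 = θ e.val.2 then p else q

/-- Probability mass function of the observed graph under `θ`. -/
noncomputable def graphPMF {n : ℕ} (p q : ℝ) (θ : Fin n → Bool) (x : ObsGraph n) : ℝ :=
  ∏ e : Edge n, if x e then edgeProb p q θ e else 1 - edgeProb p q θ e

/-- Hellinger affinity of Bernoulli parameters. -/
noncomputable def rho (p q : ℝ) : ℝ := Real.sqrt (p * q) + Real.sqrt ((1 - p) * (1 - q))

/-- Edges whose probability changes from `p` to `q` when replacing `θ` by `η`. -/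
def D1 {n : ℕ} (θ η : Fin n → Bool) : Finset (Fin n × Fin n) :=
  Finset.univ.filter fun e => e.1 < e.2 ∧ θ e.1 = θ e.2 ∧ η e.1 ≠ η e.2

/-- Edges whose probability changes from `q` to `p` when replacing `θ` by `η`. -/
def D2 {n : ℕ} (θ η : Fin n → Bool) : Finset (Fin n × Fin n) :=
  Finset.univ.filter fun e => e.1 < e.2 ∧ θ e.1 ≠ θ e.2 ∧ η e.1 = η e.2

/-- Hamming distance. -/
def hdist {n : ℕ} (θ η : Fin n → Bool) : ℕ := (Finset.univ.filter fun i => θ i ≠ η i).card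

/-- The metric `k(θ,η) = h(θ,η) ∧ (n - h(θ,η))`. -/
def kdist {n : ℕ} (θ η : Fin n → Bool) : ℕ := min (hdist θ η) (n - hdist θ η)

/-- Size of the smallest community. -/
def countOnes {n : ℕ} (θ : Fin n → Bool) : ℕ := (Finset.univ.filter fun i => θ i = true).card

/-- The parameter space `Θ_n`. -/
def Theta (n : ℕ) : Finset (Fin n → Bool) :=
  Finset.univ.filter fun θ => 2 * countOnes θ ≤ n ∧
    ∀ i : Fin n, 2 * countOnes θ = n → (i : ℕ) = 0 → θ i = false

/-- Posterior mass of `A ⊆ Θ_n` given data `x`, under prior mass function `π`. -/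
noncomputable def postMass {n : ℕ} (p q : ℝ) (pri : (Fin n → Bool) → ℝ)
    (A : Finset (Fin n → Bool)) (x : ObsGraph n) : ℝ :=
  (∑ η ∈ A, pri η * graphPMF p q η x) / (∑ η ∈ Theta n, pri η * graphPMF p q η x)

/-- `P_θ`-expectation of the posterior mass of `A`. -/
noncomputable def expPostMass {n : ℕ} (p q : ℝ) (pri : (Fin n → Bool) → ℝ)
    (θ : Fin n → Bool) (A : Finset (Fin n → Bool)) : ℝ :=
  ∑ x : ObsGraph n, graphPMF p q θ x * postMass p q pri A x

/-- The uniform prior on `Θ_n`. -/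
noncomputable def unifPrior (n : ℕ) : (Fin n → Bool) → ℝ := fun _ => ((2:ℝ) ^ (n - 1))⁻¹

/-- Hamming ball `B_n(θ,k)` inside `Θ_n`. -/
def hball {n : ℕ} (θ : Fin n → Bool) (k : ℕ) : Finset (Fin n → Bool) :=
  (Theta n).filter fun η => kdist η θ ≤ k

section AuxStmt7

/-- Number of edges whose within/between status changes between `θ` and `η`. -/
def chCard {n : ℕ} (θ η : Fin n → Bool) : ℕ :=
  (Finset.univ.filter fun e : Edge n =>
    ¬((θ e.val.1 = θ e.val.2) ↔ (η e.val.1 = η e.val.2))).card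

lemma edgeProb_mem {n : ℕ} {p q : ℝ} (hp : p ∈ Set.Ioo (0:ℝ) 1) (hq : q ∈ Set.Ioo (0:ℝ) 1)
    (θ : Fin n → Bool) (e : Edge n) : edgeProb p q θ e ∈ Set.Ioo (0:ℝ) 1 := by
  unfold edgeProb; split <;> assumption

lemma graphPMF_pos {n : ℕ} {p q : ℝ} (hp : p ∈ Set.Ioo (0:ℝ) 1) (hq : q ∈ Set.Ioo (0:ℝ) 1)
    (θ : Fin n → Bool) (x : ObsGraph n) : 0 < graphPMF p q θ x := by
  apply Finset.prod_pos
  intro e _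
  have h := edgeProb_mem hp hq θ e
  split
  · exact h.1
  · linarith [h.2]

lemma sum_prod_bool {ι : Type*} [Fintype ι] [DecidableEq ι] (f : ι → Bool → ℝ) :
    ∑ x : ι → Bool, ∏ i, f i (x i) = ∏ i, (f i true + f i false) := by
  rw [← Fintype.prod_sum f]
  exact Finset.prod_congr rfl fun i _ => by rw [Fintype.sum_bool]

lemma sum_graphPMF {n : ℕ} {p q : ℝ} (θ : Fin n → Bool) :
    ∑ x : ObsGraph n, graphPMF p q θ x = 1 := by
  unfold graphPMF
  refine Eq.trans (sum_prod_bool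
    (fun (e : Edge n) (b : Bool) => if b then edgeProb p q θ e else 1 - edgeProb p q θ e)) ?_
  apply Finset.prod_eq_one
  intro e _
  simp

lemma rho_pos {p q : ℝ} (hp : p ∈ Set.Ioo (0:ℝ) 1) (hq : q ∈ Set.Ioo (0:ℝ) 1) :
    0 < rho p q :=
  add_pos_of_pos_of_nonneg (Real.sqrt_pos.mpr (mul_pos hp.1 hq.1)) (Real.sqrt_nonneg _)

lemma rho_le_one {p q : ℝ} (hp : p ∈ Set.Ioo (0:ℝ) 1) (hq : q ∈ Set.Ioo (0:ℝ) 1) :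
    rho p q ≤ 1 := by
  obtain ⟨hp0, hp1⟩ := hp
  obtain ⟨hq0, hq1⟩ := hq
  set a := Real.sqrt (p * q) with ha
  set b := Real.sqrt ((1 - p) * (1 - q)) with hb
  set c := Real.sqrt (p * (1 - q)) with hc
  set d := Real.sqrt (q * (1 - p)) with hd
  have ha2 : a ^ 2 = p * q := Real.sq_sqrt (by positivity)
  have hb2 : b ^ 2 = (1 - p) * (1 - q) := Real.sq_sqrt (by nlinarith)
  have hc2 : c ^ 2 = p * (1 - q) := Real.sq_sqrt (by nlinarith)
  have hd2 : d ^ 2 = q * (1 - p) := Real.sq_sqrt (by nlinarith)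
  have hcd : c * d = a * b := by
    rw [ha, hb, hc, hd, ← Real.sqrt_mul (by nlinarith), ← Real.sqrt_mul (by positivity)]
    congr 1
    ring
  have h0a : 0 ≤ a := Real.sqrt_nonneg _
  have h0b : 0 ≤ b := Real.sqrt_nonneg _
  show a + b ≤ 1
  have h2ab : 2 * (a * b) ≤ p * (1 - q) + q * (1 - p) := by
    nlinarith [sq_nonneg (c - d), hc2, hd2, hcd]
  have hsq : (a + b) ^ 2 ≤ 1 := by nlinarith [h2ab, ha2, hb2]
  nlinarith [hsq, h0a, h0b]

lemma sqrt_prod' {α : Type*} {s : Finset α} {f : α → ℝ} (h : ∀ i ∈ s, 0 ≤ f i) :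
    Real.sqrt (∏ i ∈ s, f i) = ∏ i ∈ s, Real.sqrt (f i) := by
  induction s using Finset.cons_induction with
  | empty => simp
  | cons a s ha ih =>
    rw [Finset.prod_cons, Finset.prod_cons,
      Real.sqrt_mul (h a (Finset.mem_cons_self a s)),
      ih (fun i hi => h i (Finset.mem_cons_of_mem hi))]

lemma min_le_sqrt_mul {a b : ℝ} (ha : 0 ≤ a) (hb : 0 ≤ b) :
    min a b ≤ Real.sqrt (a * b) := by
  rcases le_total a b with h | h
  · rw [min_eq_left h]
    calc a = Real.sqrt (a * a) := (Real.sqrt_mul_self ha).symm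
      _ ≤ Real.sqrt (a * b) := Real.sqrt_le_sqrt (by nlinarith)
  · rw [min_eq_right h]
    calc b = Real.sqrt (b * b) := (Real.sqrt_mul_self hb).symm
      _ ≤ Real.sqrt (a * b) := Real.sqrt_le_sqrt (by nlinarith)

lemma edge_factor {n : ℕ} {p q : ℝ} (hp : p ∈ Set.Ioo (0:ℝ) 1) (hq : q ∈ Set.Ioo (0:ℝ) 1)
    (θ η : Fin n → Bool) (e : Edge n) :
    Real.sqrt (edgeProb p q θ e * edgeProb p q η e)
      + Real.sqrt ((1 - edgeProb p q θ e) * (1 - edgeProb p q η e))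
    = if (θ e.val.1 = θ e.val.2) ↔ (η e.val.1 = η e.val.2) then 1 else rho p q := by
  obtain ⟨hp0, hp1⟩ := hp
  obtain ⟨hq0, hq1⟩ := hq
  unfold edgeProb rho
  rcases Decidable.em (θ e.val.1 = θ e.val.2) with h1 | h1 <;>
    rcases Decidable.em (η e.val.1 = η e.val.2) with h2 | h2
  · rw [if_pos h1, if_pos h2, if_pos (iff_of_true h1 h2),
      Real.sqrt_mul_self hp0.le, Real.sqrt_mul_self (by linarith)]
    ring
  · rw [if_pos h1, if_neg h2,
      if_neg (show ¬_ from fun hiff => h2 (hiff.mp h1))]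
  · rw [if_neg h1, if_pos h2,
      if_neg (show ¬_ from fun hiff => h1 (hiff.mpr h2)),
      mul_comm q p, mul_comm (1 - q) (1 - p)]
  · rw [if_neg h1, if_neg h2, if_pos (iff_of_false h1 h2),
      Real.sqrt_mul_self hq0.le, Real.sqrt_mul_self (by linarith)]
    ring

end AuxStmt7
lemma hellinger {n : ℕ} {p q : ℝ} (hp : p ∈ Set.Ioo (0:ℝ) 1) (hq : q ∈ Set.Ioo (0:ℝ) 1)
    (θ η : Fin n → Bool) :
    ∑ x : ObsGraph n, Real.sqrt (graphPMF p q θ x * graphPMF p q η x)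
      = rho p q ^ chCard θ η := by
  have hfac : ∀ (ξ : Fin n → Bool) (e : Edge n) (b : Bool),
      0 ≤ (if b then edgeProb p q ξ e else 1 - edgeProb p q ξ e) := by
    intro ξ e b
    have h := edgeProb_mem hp hq ξ e
    cases b
    · simp only [Bool.false_eq_true, if_false]; linarith [h.2]
    · simp only [if_true]; exact h.1.le
  have key : ∀ x : ObsGraph n, Real.sqrt (graphPMF p q θ x * graphPMF p q η x)
      = ∏ e : Edge n, (fun b : Bool =>
          Real.sqrt ((if b then edgeProb p q θ e else 1 - edgeProb p q θ e)
            * (if b then edgeProb p q η e else 1 - edgeProb p q η e))) (x e) := by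
    intro x
    rw [graphPMF, graphPMF, ← Finset.prod_mul_distrib]
    exact sqrt_prod' fun e _ => mul_nonneg (hfac θ e (x e)) (hfac η e (x e))
  rw [Finset.sum_congr rfl fun x _ => key x]
  refine Eq.trans (sum_prod_bool (fun (e : Edge n) (b : Bool) =>
    Real.sqrt ((if b then edgeProb p q θ e else 1 - edgeProb p q θ e)
      * (if b then edgeProb p q η e else 1 - edgeProb p q η e)))) ?_
  have step : ∀ e : Edge n,
      Real.sqrt ((if true then edgeProb p q θ e else 1 - edgeProb p q θ e)
          * (if true then edgeProb p q η e else 1 - edgeProb p q η e))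
        + Real.sqrt ((if false then edgeProb p q θ e else 1 - edgeProb p q θ e)
          * (if false then edgeProb p q η e else 1 - edgeProb p q η e))
      = if (θ e.val.1 = θ e.val.2) ↔ (η e.val.1 = η e.val.2) then 1 else rho p q := by
    intro e
    simpa using edge_factor hp hq θ η e
  rw [Finset.prod_congr rfl fun e _ => step e, Finset.prod_ite, Finset.prod_const,
    Finset.prod_const, one_pow, one_mul]
  rfl

lemma card_changed_ge {n : ℕ} (θ η : Fin n → Bool) :
    hdist θ η * (n - hdist θ η) ≤ chCard θ η := by
  set S := (Finset.univ.filter fun i : Fin n => θ i ≠ η i) with hS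
  have hScard : S.card = hdist θ η := rfl
  have hTcard : Sᶜ.card = n - hdist θ η := by
    rw [Finset.card_compl, hScard]
    congr 1
    exact Fintype.card_fin n
  have bool1 : ∀ w x y z : Bool, w ≠ y → x = z → ¬((w = x) ↔ (y = z)) := by decide
  have hchEq : chCard θ η = (Finset.univ.filter fun e : Fin n × Fin n =>
      e.1 < e.2 ∧ ¬((θ e.1 = θ e.2) ↔ (η e.1 = η e.2))).card := by
    unfold chCard
    refine Finset.card_bij (fun (e : Edge n) _ => e.val) ?_ ?_ ?_
    · intro e he
      exact Finset.mem_filter.mpr ⟨Finset.mem_univ _, e.prop, (Finset.mem_filter.mp he).2⟩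
    · intro e₁ h₁ e₂ h₂ hv
      exact Subtype.ext hv
    · intro e he
      obtain ⟨-, hlt, hch⟩ := Finset.mem_filter.mp he
      exact ⟨⟨e, hlt⟩, Finset.mem_filter.mpr ⟨Finset.mem_univ _, hch⟩, rfl⟩
  rw [hchEq, ← hTcard, ← hScard, ← Finset.card_product]
  apply Finset.card_le_card_of_injOn (fun pr => if pr.1 < pr.2 then pr else (pr.2, pr.1))
  · rintro ⟨a, b⟩ hab
    rw [Finset.mem_coe, Finset.mem_product] at hab
    obtain ⟨haS, hbS⟩ := hab
    have ha : θ a ≠ η a := (Finset.mem_filter.mp haS).2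
    have hb' : θ b = η b := by
      have := Finset.mem_compl.mp hbS
      by_contra hbb
      exact this (Finset.mem_filter.mpr ⟨Finset.mem_univ _, hbb⟩)
    have hne : a ≠ b := fun h => ha (h ▸ hb')
    by_cases hlt : a < b
    · simp only [if_pos hlt]
      exact Finset.mem_filter.mpr ⟨Finset.mem_univ _, hlt, bool1 _ _ _ _ ha hb'⟩
    · simp only [if_neg hlt]
      have hlt' : b < a := lt_of_le_of_ne (not_lt.mp hlt) (Ne.symm hne)
      refine Finset.mem_filter.mpr ⟨Finset.mem_univ _, hlt', ?_⟩
      have bool2 : ∀ w x y z : Bool, w ≠ y → x = z → ¬((x = w) ↔ (z = y)) := by decide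
      exact bool2 _ _ _ _ ha hb'
  · rintro ⟨a, b⟩ ha ⟨a', b'⟩ hb hf
    simp only [Finset.coe_product, Set.mem_prod, Finset.mem_coe] at ha hb
    obtain ⟨haS, hbT⟩ := ha
    obtain ⟨haS', hbT'⟩ := hb
    have hmem : ∀ i, i ∈ S → i ∈ Sᶜ → False := fun i h1 h2 => (Finset.mem_compl.mp h2) h1
    simp only at hf
    split_ifs at hf with h1 h2 h2 <;> simp only [Prod.mk.injEq] at hf
    · exact Prod.ext hf.1 hf.2
    · exact absurd (hf.1 ▸ hbT' : a ∈ Sᶜ) (fun hc => hmem a haS hc)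
    · exact absurd (hf.2 ▸ haS : b' ∈ S) (fun hc => hmem b' hc hbT')
    · exact Prod.ext hf.2 hf.1
lemma card_hdist_le {n : ℕ} (θ : Fin n → Bool) (h : ℕ) :
    ((Finset.univ : Finset (Fin n → Bool)).filter fun η => hdist θ η = h).card
      ≤ n.choose h := by
  have boolinj : ∀ t a b : Bool, ((t ≠ a) ↔ (t ≠ b)) → a = b := by decide
  calc ((Finset.univ : Finset (Fin n → Bool)).filter fun η => hdist θ η = h).card
      ≤ (Finset.powersetCard h (Finset.univ : Finset (Fin n))).card := by
        apply Finset.card_le_card_of_injOn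
          (fun η => Finset.univ.filter fun i => θ i ≠ η i)
        · intro η hη
          exact Finset.mem_powersetCard.mpr
            ⟨Finset.filter_subset _ _, (Finset.mem_filter.mp hη).2⟩
        · intro η₁ h₁ η₂ h₂ hEq
          funext i
          have := Finset.ext_iff.mp hEq i
          simp only [Finset.mem_filter, Finset.mem_univ, true_and] at this
          exact boolinj (θ i) (η₁ i) (η₂ i) this
    _ = n.choose h := by
        rw [Finset.card_powersetCard, Finset.card_univ, Fintype.card_fin]

lemma choose_le_pow_min (n h : ℕ) (hh : h ≤ n) :
    n.choose h ≤ n ^ min h (n - h) := by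
  rcases min_cases h (n - h) with ⟨e, -⟩ | ⟨e, -⟩ <;> rw [e]
  · exact Nat.choose_le_pow n h
  · rw [← Nat.choose_symm hh]
    exact Nat.choose_le_pow n (n - h)

lemma hdist_mem {n : ℕ} (hn : 2 ≤ n) {θ η : Fin n → Bool}
    (hθ : θ ∈ Theta n) (hη : η ∈ (Theta n).erase θ) :
    hdist θ η ∈ Finset.Icc 1 (n - 1) := by
  obtain ⟨hne, hηT⟩ := Finset.mem_erase.mp hη
  have hcard : hdist θ η ≤ n := by
    calc hdist θ η ≤ (Finset.univ : Finset (Fin n)).card := Finset.card_filter_le _ _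
      _ = n := by rw [Finset.card_univ, Fintype.card_fin]
  rw [Finset.mem_Icc]
  constructor
  · rw [Nat.one_le_iff_ne_zero]
    intro h0
    apply hne
    have hempty := Finset.card_eq_zero.mp h0
    funext i
    by_contra hi
    have : i ∈ (Finset.univ.filter fun i => θ i ≠ η i) :=
      Finset.mem_filter.mpr ⟨Finset.mem_univ _, fun hc => hi hc.symm⟩
    rw [hempty] at this
    exact absurd this (Finset.notMem_empty i)
  · by_contra hc
    have hdn : hdist θ η = n := by omega
    have huniv : (Finset.univ.filter fun i => θ i ≠ η i) = Finset.univ := by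
      apply Finset.eq_univ_of_card
      rw [Fintype.card_fin]
      exact hdn
    have hall : ∀ i, θ i ≠ η i := by
      intro i
      have hi : i ∈ (Finset.univ.filter fun i => θ i ≠ η i) := by
        rw [huniv]; exact Finset.mem_univ i
      exact (Finset.mem_filter.mp hi).2
    have hco : countOnes θ + countOnes η = n := by
      unfold countOnes
      have hswap : (Finset.univ.filter fun i => η i = true)
          = (Finset.univ.filter fun i => ¬(θ i = true)) := by
        ext i
        simp only [Finset.mem_filter, Finset.mem_univ, true_and]
        have := hall i
        cases hθi : θ i <;> cases hηi : η i <;> simp_all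
      rw [hswap, Finset.card_filter_add_card_filter_not, Finset.card_univ,
        Fintype.card_fin]
    have hθm := (Finset.mem_filter.mp hθ).2
    have hηm := (Finset.mem_filter.mp hηT).2
    have h2θ : 2 * countOnes θ = n := by omega
    have h2η : 2 * countOnes η = n := by omega
    have ht := hθm.2 ⟨0, by omega⟩ h2θ rfl
    have ht' := hηm.2 ⟨0, by omega⟩ h2η rfl
    exact hall ⟨0, by omega⟩ (by rw [ht, ht'])

lemma geom_bound (n : ℕ) (hn : 1 ≤ n) :
    ∑ h ∈ Finset.Icc 1 (n - 1), (1 / 2 : ℝ) ^ (min h (n - h) - 1) ≤ 4 := by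
  have step : ∀ h ∈ Finset.Icc 1 (n - 1),
      (1 / 2 : ℝ) ^ (min h (n - h) - 1) ≤ (1 / 2 : ℝ) ^ (h - 1) + (1 / 2 : ℝ) ^ (n - h - 1) := by
    intro h hh
    rcases min_cases h (n - h) with ⟨e, -⟩ | ⟨e, -⟩ <;> rw [e]
    · exact le_add_of_nonneg_right (by positivity)
    · exact le_add_of_nonneg_left (by positivity)
  refine (Finset.sum_le_sum step).trans ?_
  rw [Finset.sum_add_distrib]
  have hIcc : Finset.Icc 1 (n - 1) = Finset.Ico 1 n := by
    rw [← Finset.Ico_add_one_right_eq_Icc]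
    congr 1
    omega
  have e1 : ∑ h ∈ Finset.Icc 1 (n - 1), (1 / 2 : ℝ) ^ (h - 1)
      = ∑ i ∈ Finset.range (n - 1), (1 / 2 : ℝ) ^ i := by
    rw [hIcc, Finset.sum_Ico_eq_sum_range]
    exact Finset.sum_congr rfl fun i _ => by congr 1; omega
  have e2 : ∑ h ∈ Finset.Icc 1 (n - 1), (1 / 2 : ℝ) ^ (n - h - 1)
      = ∑ i ∈ Finset.range (n - 1), (1 / 2 : ℝ) ^ i := by
    rw [hIcc, Finset.sum_Ico_eq_sum_range]
    calc ∑ i ∈ Finset.range (n - 1), (1 / 2 : ℝ) ^ (n - (1 + i) - 1)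
        = ∑ i ∈ Finset.range (n - 1), (fun j => (1 / 2 : ℝ) ^ j) ((n - 1) - 1 - i) := by
          exact Finset.sum_congr rfl fun i hi => by congr 1; omega
      _ = ∑ i ∈ Finset.range (n - 1), (1 / 2 : ℝ) ^ i :=
          Finset.sum_range_reflect (fun j => (1 / 2 : ℝ) ^ j) (n - 1)
  rw [e1, e2]
  have := sum_geometric_two_le (n - 1)
  linarith
lemma post_bounds {n : ℕ} {p q : ℝ} (hp : p ∈ Set.Ioo (0:ℝ) 1) (hq : q ∈ Set.Ioo (0:ℝ) 1)
    {θ : Fin n → Bool} (hθ : θ ∈ Theta n) :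
    1 - (∑ η ∈ (Theta n).erase θ, rho p q ^ chCard θ η)
        ≤ expPostMass p q (unifPrior n) θ {θ}
      ∧ expPostMass p q (unifPrior n) θ {θ} ≤ 1 := by
  have hw0 : 0 < unifPrior n θ := by unfold unifPrior; positivity
  set den := fun x : ObsGraph n => ∑ η ∈ Theta n, unifPrior n η * graphPMF p q η x with hden
  have hterm : ∀ (x : ObsGraph n) (η : Fin n → Bool), 0 ≤ unifPrior n η * graphPMF p q η x :=
    fun x η => (mul_pos hw0 (graphPMF_pos hp hq η x)).le
  have hden0 : ∀ x, 0 < den x := fun x =>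
    Finset.sum_pos' (fun η _ => hterm x η) ⟨θ, hθ, mul_pos hw0 (graphPMF_pos hp hq θ x)⟩
  have hsum1 : ∑ x : ObsGraph n, graphPMF p q θ x = 1 := sum_graphPMF θ
  have hE : expPostMass p q (unifPrior n) θ {θ}
      = ∑ x : ObsGraph n, graphPMF p q θ x * ((unifPrior n θ * graphPMF p q θ x) / den x) := by
    unfold expPostMass postMass
    simp only [Finset.sum_singleton]
    rfl
  have hr : ∀ (x : ObsGraph n) (η : Fin n → Bool), η ∈ Theta n →
      graphPMF p q θ x * ((unifPrior n η * graphPMF p q η x) / den x) ≤ graphPMF p q θ x := by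
    intro x η hη
    apply mul_le_of_le_one_right (graphPMF_pos hp hq θ x).le
    rw [div_le_one (hden0 x)]
    exact Finset.single_le_sum (fun ξ _ => hterm x ξ) hη
  constructor
  · have hsum_r : ∀ x : ObsGraph n,
        ∑ η ∈ Theta n, graphPMF p q θ x * ((unifPrior n η * graphPMF p q η x) / den x)
          = graphPMF p q θ x := by
      intro x
      rw [← Finset.mul_sum, ← Finset.sum_div,
        show (∑ i ∈ Theta n, unifPrior n i * graphPMF p q i x) = den x from rfl,
        div_self (hden0 x).ne', mul_one]
    have hsplit : ∀ x : ObsGraph n,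
        graphPMF p q θ x * ((unifPrior n θ * graphPMF p q θ x) / den x)
          = graphPMF p q θ x - ∑ η ∈ (Theta n).erase θ,
              graphPMF p q θ x * ((unifPrior n η * graphPMF p q η x) / den x) := by
      intro x
      have := Finset.sum_erase_add (Theta n)
        (fun η => graphPMF p q θ x * ((unifPrior n η * graphPMF p q η x) / den x)) hθ
      rw [hsum_r x] at this
      linarith
    have hEeq : expPostMass p q (unifPrior n) θ {θ}
        = 1 - ∑ η ∈ (Theta n).erase θ, ∑ x : ObsGraph n,
            graphPMF p q θ x * ((unifPrior n η * graphPMF p q η x) / den x) := by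
      rw [hE, Finset.sum_congr rfl fun x _ => hsplit x, Finset.sum_sub_distrib, hsum1,
        Finset.sum_comm]
    rw [hEeq]
    apply sub_le_sub_left
    apply Finset.sum_le_sum
    intro η hη
    rw [← hellinger hp hq θ η]
    apply Finset.sum_le_sum
    intro x _
    have hη' : η ∈ Theta n := Finset.mem_of_mem_erase hη
    have h1 := hr x η hη'
    have h2 : graphPMF p q θ x * ((unifPrior n η * graphPMF p q η x) / den x)
        ≤ graphPMF p q η x := by
      have e : graphPMF p q θ x * ((unifPrior n η * graphPMF p q η x) / den x)
          = graphPMF p q η x * ((unifPrior n θ * graphPMF p q θ x) / den x) := by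
        unfold unifPrior
        ring
      rw [e]
      apply mul_le_of_le_one_right (graphPMF_pos hp hq η x).le
      rw [div_le_one (hden0 x)]
      exact Finset.single_le_sum (fun ξ _ => hterm x ξ) hθ
    calc graphPMF p q θ x * ((unifPrior n η * graphPMF p q η x) / den x)
        ≤ min (graphPMF p q θ x) (graphPMF p q η x) := le_min h1 h2
      _ ≤ Real.sqrt (graphPMF p q θ x * graphPMF p q η x) :=
          min_le_sqrt_mul (graphPMF_pos hp hq θ x).le (graphPMF_pos hp hq η x).le
  · rw [hE, ← hsum1]
    exact Finset.sum_le_sum fun x _ => hr x θ hθ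
lemma sum_bound {n : ℕ} (hn : 2 ≤ n) {p q : ℝ} (hp : p ∈ Set.Ioo (0:ℝ) 1)
    (hq : q ∈ Set.Ioo (0:ℝ) 1) {θ : Fin n → Bool} (hθ : θ ∈ Theta n)
    (hε : (n : ℝ) * rho p q ^ ((n : ℝ) / 2) ≤ 1 / 2) :
    ∑ η ∈ (Theta n).erase θ, rho p q ^ chCard θ η
      ≤ 4 * ((n : ℝ) * rho p q ^ ((n : ℝ) / 2)) := by
  have hρ0 : 0 < rho p q := rho_pos hp hq
  have hρ1 : rho p q ≤ 1 := rho_le_one hp hq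
  set ε := (n : ℝ) * rho p q ^ ((n : ℝ) / 2) with hεdef
  have hε0 : 0 ≤ ε := by
    apply mul_nonneg (Nat.cast_nonneg n)
    exact Real.rpow_nonneg hρ0.le _
  have hA : ∀ η ∈ (Theta n).erase θ,
      rho p q ^ chCard θ η
        ≤ (rho p q ^ ((n : ℝ) / 2)) ^ min (hdist θ η) (n - hdist θ η) := by
    intro η hη
    have hmem := Finset.mem_Icc.mp (hdist_mem hn hθ hη)
    set h := hdist θ η with hh
    set k := min h (n - h) with hk
    have hhn : h ≤ n := by omega
    have hcle : h * (n - h) ≤ chCard θ η := card_changed_ge θ η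
    have s1 : rho p q ^ chCard θ η ≤ rho p q ^ (h * (n - h)) :=
      pow_le_pow_of_le_one hρ0.le hρ1 hcle
    have hkn : k * n ≤ 2 * (h * (n - h)) := by
      have hkk : k * (n - k) = h * (n - h) := by
        rcases Nat.le_total h (n - h) with hcase | hcase
        · rw [show k = h from min_eq_left hcase]
        · rw [show k = n - h from min_eq_right hcase, show n - (n - h) = h by omega,
            Nat.mul_comm]
      calc k * n ≤ k * (2 * (n - k)) := Nat.mul_le_mul_left _ (by omega)
        _ = 2 * (k * (n - k)) := by ring
        _ = 2 * (h * (n - h)) := by rw [hkk]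
    have s2 : rho p q ^ (h * (n - h)) ≤ (rho p q ^ ((n : ℝ) / 2)) ^ k := by
      rw [← Real.rpow_natCast (rho p q) (h * (n - h)),
        ← Real.rpow_natCast (rho p q ^ ((n : ℝ) / 2)) k,
        ← Real.rpow_mul hρ0.le]
      apply Real.rpow_le_rpow_of_exponent_ge hρ0 hρ1
      have hcast : (k : ℝ) * n ≤ 2 * ((h * (n - h) : ℕ) : ℝ) := by
        exact_mod_cast hkn
      push_cast at hcast ⊢
      nlinarith [hcast]
    exact s1.trans s2
  have hmaps : ∀ η ∈ (Theta n).erase θ, hdist θ η ∈ Finset.Icc 1 (n - 1) :=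
    fun η hη => hdist_mem hn hθ hη
  have hfib := Finset.sum_fiberwise_of_maps_to hmaps
    (fun η => (rho p q ^ ((n : ℝ) / 2)) ^ min (hdist θ η) (n - hdist θ η))
  have hB1 : ∑ η ∈ (Theta n).erase θ, rho p q ^ chCard θ η
      ≤ ∑ h ∈ Finset.Icc 1 (n - 1),
          ∑ η ∈ ((Theta n).erase θ).filter (fun η => hdist θ η = h),
            (rho p q ^ ((n : ℝ) / 2)) ^ min (hdist θ η) (n - hdist θ η) := by
    rw [hfib]
    exact Finset.sum_le_sum hA
  have hB3 : ∀ h ∈ Finset.Icc 1 (n - 1),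
      (∑ η ∈ ((Theta n).erase θ).filter (fun η => hdist θ η = h),
        (rho p q ^ ((n : ℝ) / 2)) ^ min (hdist θ η) (n - hdist θ η))
      ≤ ε * (1 / 2 : ℝ) ^ (min h (n - h) - 1) := by
    intro h hh
    rw [Finset.mem_Icc] at hh
    have hconst : ∀ η ∈ ((Theta n).erase θ).filter (fun η => hdist θ η = h),
        (rho p q ^ ((n : ℝ) / 2)) ^ min (hdist θ η) (n - hdist θ η)
          = (rho p q ^ ((n : ℝ) / 2)) ^ min h (n - h) := by
      intro η hη
      rw [(Finset.mem_filter.mp hη).2]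
    rw [Finset.sum_congr rfl hconst, Finset.sum_const, nsmul_eq_mul]
    set k := min h (n - h) with hk
    have hk1 : 1 ≤ k := by omega
    have hg0 : 0 ≤ rho p q ^ ((n : ℝ) / 2) := Real.rpow_nonneg hρ0.le _
    have hcard : ((((Theta n).erase θ).filter (fun η => hdist θ η = h)).card : ℝ)
        ≤ ((n : ℝ)) ^ k := by
      have hsub : ((Theta n).erase θ).filter (fun η => hdist θ η = h)
          ⊆ (Finset.univ : Finset (Fin n → Bool)).filter fun η => hdist θ η = h := by
        intro η hη
        exact Finset.mem_filter.mpr ⟨Finset.mem_univ _, (Finset.mem_filter.mp hη).2⟩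
      have h1 := (Finset.card_le_card hsub).trans (card_hdist_le θ h)
      have h2 := choose_le_pow_min n h (by omega)
      calc ((((Theta n).erase θ).filter (fun η => hdist θ η = h)).card : ℝ)
          ≤ ((n.choose h : ℕ) : ℝ) := by exact_mod_cast h1
        _ ≤ (((n ^ k : ℕ)) : ℝ) := by exact_mod_cast h2
        _ = ((n : ℝ)) ^ k := by push_cast; ring
    calc ((((Theta n).erase θ).filter (fun η => hdist θ η = h)).card : ℝ)
          * (rho p q ^ ((n : ℝ) / 2)) ^ k
        ≤ ((n : ℝ)) ^ k * (rho p q ^ ((n : ℝ) / 2)) ^ k :=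
          mul_le_mul_of_nonneg_right hcard (pow_nonneg hg0 _)
      _ = ε ^ k := by rw [← mul_pow]
      _ ≤ ε * (1 / 2 : ℝ) ^ (k - 1) := by
          rw [show k = (k - 1) + 1 by omega, pow_succ]
          rw [show (k - 1) + 1 - 1 = k - 1 by omega]
          calc ε ^ (k - 1) * ε ≤ (1 / 2 : ℝ) ^ (k - 1) * ε :=
              mul_le_mul_of_nonneg_right (pow_le_pow_left₀ hε0 hε _) hε0
            _ = ε * (1 / 2 : ℝ) ^ (k - 1) := mul_comm _ _
  calc ∑ η ∈ (Theta n).erase θ, rho p q ^ chCard θ η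
      ≤ ∑ h ∈ Finset.Icc 1 (n - 1), ε * (1 / 2 : ℝ) ^ (min h (n - h) - 1) :=
        hB1.trans (Finset.sum_le_sum hB3)
    _ = ε * ∑ h ∈ Finset.Icc 1 (n - 1), (1 / 2 : ℝ) ^ (min h (n - h) - 1) :=
        (Finset.mul_sum _ _ _).symm
    _ ≤ ε * 4 := mul_le_mul_of_nonneg_left (geom_bound n (by omega)) hε0
    _ = 4 * ε := mul_comm _ _
/-- if `n ρ(p_n,q_n)^{n/2} → 0` then the posterior recovers the true
community assignment exactly. -/
theorem stmt7 (p q : ℕ → ℝ) (hp : ∀ n, 2 ≤ n → p n ∈ Set.Ioo (0:ℝ) 1)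
    (hq : ∀ n, 2 ≤ n → q n ∈ Set.Ioo (0:ℝ) 1)
    (θ : (n : ℕ) → Fin n → Bool) (hθ : ∀ n, 2 ≤ n → θ n ∈ Theta n)
    (hcond : Filter.Tendsto (fun n : ℕ => (n : ℝ) * rho (p n) (q n) ^ ((n : ℝ) / 2))
      Filter.atTop (nhds 0)) :
    Filter.Tendsto (fun n : ℕ => expPostMass (p n) (q n) (unifPrior n) (θ n) {θ n})
      Filter.atTop (nhds 1) := by
  have hhalf : ∀ᶠ n : ℕ in Filter.atTop,
      (n : ℝ) * rho (p n) (q n) ^ ((n : ℝ) / 2) ≤ 1 / 2 :=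
    hcond.eventually (eventually_le_nhds (by norm_num))
  have hlim : Filter.Tendsto
      (fun n : ℕ => 1 - 4 * ((n : ℝ) * rho (p n) (q n) ^ ((n : ℝ) / 2)))
      Filter.atTop (nhds 1) := by
    have h4 : Filter.Tendsto
        (fun n : ℕ => 4 * ((n : ℝ) * rho (p n) (q n) ^ ((n : ℝ) / 2)))
        Filter.atTop (nhds 0) := by
      simpa using hcond.const_mul (4 : ℝ)
    simpa using tendsto_const_nhds.sub h4
  refine tendsto_of_tendsto_of_tendsto_of_le_of_le' hlim tendsto_const_nhds ?_ ?_
  · filter_upwards [hhalf, Filter.eventually_ge_atTop 2] with n hε hn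
    have hb := (post_bounds (hp n hn) (hq n hn) (hθ n hn)).1
    have hs := sum_bound hn (hp n hn) (hq n hn) (hθ n hn) hε
    linarith
  · filter_upwards [Filter.eventually_ge_atTop 2] with n hn
    exact (post_bounds (hp n hn) (hq n hn) (hθ n hn)).2
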